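/- Let G = (V,E) be a PTN with a zone partition 𝒵 and a price function P : ℕ≥1 → ℝ≥0 satisfying P(k) ≤ P(i) + P(k − i + 1) for all k ∈ ℕ≥1 and i ∈ {1,…,k}. Then the zone tariff with multiple counting π(W) = P(σ_M(W)) satisfies the no-stopover property: for every path (v_1,…,v_n) with n ≥ 3 and every intermediate index i ∈ {2,…,n−1}, π((v_1,…,v_n)) ≤ π((v_1,…,v_i)) + π((v_i,…,v_n)). -/

import Mathlib

open scoped Classical

noncomputable section

/-- A zone partition of the vertex set `V`: nonempty, pairwise disjoint zones covering `V`. -/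
def IsZonePartition {V : Type*} (Z : Finset (Finset V)) : Prop :=
  (∀ A ∈ Z, A.Nonempty) ∧ (∀ A ∈ Z, ∀ B ∈ Z, A ≠ B → Disjoint A B) ∧
    ∀ v : V, ∃ A ∈ Z, v ∈ A

/-- `v` and `w` lie in a common zone of `Z`. -/
def SameZone {V : Type*} (Z : Finset (Finset V)) (v w : V) : Prop :=
  ∃ A ∈ Z, v ∈ A ∧ w ∈ A

/-- Multiple-counting zone function: one plus the number of zone borders crossed along `W`. -/
def sigmaM {V : Type*} (Z : Finset (Finset V)) (W : List V) : ℕ :=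
  1 + ((W.zip W.tail).filter (fun p => decide (¬ SameZone Z p.1 p.2))).length

/-- Single-counting zone function: the number of distinct zones met by `W`. -/
def sigmaS {V : Type*} (Z : Finset (Finset V)) (W : List V) : ℕ :=
  (Z.filter (fun A => ∃ v ∈ W, v ∈ A)).card

/-- If the price function satisfies P(k) ≤ P(i) + P(k - i + 1) for all k ≥ 1 and
1 ≤ i ≤ k, then the zone tariff with multiple counting satisfies the no-stopover
property: splitting a path (v_1, …, v_n), n ≥ 3, at an intermediate station v_i
(2 ≤ i ≤ n - 1, one-based) never decreases the total fare. -/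
lemma zip_tail_split {V : Type*} : ∀ (i : ℕ) (W : List V), 1 ≤ i → i ≤ W.length →
    W.zip W.tail =
      ((W.take i).zip (W.take i).tail) ++ ((W.drop (i-1)).zip (W.drop (i-1)).tail) := by
  intro i
  induction i with
  | zero => omega
  | succ i ih =>
    intro W _ hle
    rcases Nat.eq_or_lt_of_le (Nat.one_le_iff_ne_zero.mpr (Nat.succ_ne_zero i)) with h1 | h1
    · -- i + 1 = 1, i.e. i = 0
      have : i = 0 := by omega
      subst this
      match W with
      | [] => simp at hle
      | a :: t => simp
    · -- i ≥ 1
      have hi : 1 ≤ i := by omega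
      match W with
      | [] => simp at hle
      | [a] => simp at hle; omega
      | a :: b :: t =>
        have hle' : i ≤ (b :: t).length := by simp at hle ⊢; omega
        have := ih (b :: t) hi hle'
        have htake : (a :: b :: t).take (i+1) = a :: (b :: t).take i := rfl
        have htk : (b :: t).take i = b :: t.take (i-1) := by
          match i, hi with
          | (j+1), _ => rfl
        simp only [htake, htk]
        have hdrop : (a :: b :: t).drop (i+1-1) = (b :: t).drop (i-1) := by
          have : i + 1 - 1 = i := rfl
          rw [this]
          match i, hi with
          | (j+1), _ => simp
        rw [hdrop]
        simp only [List.tail_cons, List.zip_cons_cons, List.cons_append]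
        simp only [htk, List.tail_cons] at this ⊢
        rw [this]

theorem subadditive_prices_imply_no_stopover_multiple {V : Type*} (G : SimpleGraph V)
    (Z : Finset (Finset V)) (hZ : IsZonePartition Z)
    (P : ℕ → ℝ) (hP0 : ∀ k, 0 ≤ P k)
    (hsub : ∀ k : ℕ, 1 ≤ k → ∀ i : ℕ, 1 ≤ i → i ≤ k → P k ≤ P i + P (k - i + 1)) :
    ∀ W : List V, W.Chain' G.Adj → ∀ i : ℕ, 2 ≤ i → i ≤ W.length - 1 →
      P (sigmaM Z W) ≤ P (sigmaM Z (W.take i)) + P (sigmaM Z (W.drop (i - 1))) := by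
  intro W hW i hi2 hin
  have hlen : 3 ≤ W.length := by omega
  have hiW : i ≤ W.length := by omega
  have hsplit := zip_tail_split i W (by omega) hiW
  set f : V × V → Bool := fun p => decide (¬ SameZone Z p.1 p.2) with hf
  have hlen_split :
      ((W.zip W.tail).filter f).length =
        (((W.take i).zip (W.take i).tail).filter f).length +
          (((W.drop (i-1)).zip (W.drop (i-1)).tail).filter f).length := by
    rw [hsplit, List.filter_append, List.length_append]
  set a := (((W.take i).zip (W.take i).tail).filter f).length
  set b := (((W.drop (i-1)).zip (W.drop (i-1)).tail).filter f).length
  have hM : sigmaM Z W = 1 + (a + b) := by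
    show 1 + ((W.zip W.tail).filter f).length = 1 + (a + b)
    rw [hlen_split]
  have hMa : sigmaM Z (W.take i) = 1 + a := rfl
  have hMb : sigmaM Z (W.drop (i-1)) = 1 + b := rfl
  have key := hsub (1 + (a + b)) (by omega) (1 + a) (by omega) (by omega)
  have harith : 1 + (a + b) - (1 + a) + 1 = 1 + b := by omega
  rw [hM, hMa, hMb]
  rw [harith] at key
  exact key

end
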